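/- Let T be a finite plane tree with numbers x_u assigned to non-root nodes as x_u = d(u) + Σ_{i=1}^{d(u)} c(u_i)(m+2)^{-i} (m the maximal arity). If u and v are distinct non-root nodes of the same depth with u appearing strictly to the left of v in T (in the planar order), then x_u > x_v. -/

import Mathlib

inductive PlaneTree where
  | node : List PlaneTree → PlaneTree

namespace PlaneTree

def childrenOf : PlaneTree → List PlaneTree
  | .node cs => cs

def numNodes : PlaneTree → ℕ
  | .node cs => 1 + (cs.attach.map (fun c => numNodes c.1)).sum
decreasing_by have := List.sizeOf_lt_of_mem c.2; simp only [PlaneTree.node.sizeOf_spec]; omega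

/-- maximal number of children of a node of the tree -/
def maxArity : PlaneTree → ℕ
  | .node cs => max cs.length ((cs.attach.map (fun c => maxArity c.1)).foldr max 0)
decreasing_by have := List.sizeOf_lt_of_mem c.2; simp only [PlaneTree.node.sizeOf_spec]; omega

/-- the subtree rooted at the node reached by following the path `p` of
(0-based, left-to-right) child indices from the root, if it exists. -/
def subtreeAt : PlaneTree → List ℕ → Option PlaneTree
  | t, [] => some t
  | t, i :: p =>
    match (childrenOf t)[i]? with
    | some c => subtreeAt c p
    | none => none

/-- `p` is a valid path to a node of `t` (the root is `[]`); the depth of the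
corresponding node is `p.length`. -/
def IsNode (t : PlaneTree) (p : List ℕ) : Prop := (t.subtreeAt p).isSome

/-- number of children of the node at path `p` (0 if the path is invalid). -/
def arityAt (t : PlaneTree) (p : List ℕ) : ℕ :=
  ((t.subtreeAt p).map (fun s => s.childrenOf.length)).getD 0

/-- `c(u_{i+1})`: the sibling index, counted from right to left starting at 1,
of the node at depth `i+1` on the path `p`. -/
def cAt (t : PlaneTree) (p : List ℕ) (i : ℕ) : ℕ :=
  arityAt t (p.take i) - p.getD i 0

/-- `x_u = d(u) + Σ_{i=1}^{d(u)} c(u_i) (m+2)^{-i}` for the node `u` at path `p`,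
where `m` is the maximal arity of `t`. -/
noncomputable def xVal (t : PlaneTree) (p : List ℕ) : ℝ :=
  (p.length : ℝ) + ∑ i ∈ Finset.range p.length,
    (cAt t p i : ℝ) * ((maxArity t : ℝ) + 2) ^ (-(i + 1 : ℤ))

end PlaneTree

open PlaneTree



lemma subtreeAt_append (t : PlaneTree) (p q : List ℕ) :
    t.subtreeAt (p ++ q) = (t.subtreeAt p).bind (fun s => s.subtreeAt q) := by
  induction p generalizing t with
  | nil => simp [subtreeAt]
  | cons i p ih =>
    simp only [List.cons_append, subtreeAt]
    cases h : (childrenOf t)[i]? with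
    | none => simp
    | some c => simp [ih]

lemma isSome_take {t : PlaneTree} {q : List ℕ} (h : IsNode t q) (i : ℕ) :
    (t.subtreeAt (q.take i)).isSome := by
  have h2 := subtreeAt_append t (q.take i) (q.drop i)
  rw [List.take_append_drop] at h2
  unfold IsNode at h
  rw [h2] at h
  cases hs : t.subtreeAt (q.take i) <;> simp [hs] at h ⊢

lemma le_foldr_max {l : List ℕ} {x : ℕ} (h : x ∈ l) : x ≤ l.foldr max 0 := by
  induction l with
  | nil => simp at h
  | cons a l ih =>
    rcases List.mem_cons.1 h with rfl | h
    · simp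
    · simp only [List.foldr_cons, le_max_iff]; exact Or.inr (ih h)

lemma maxArity_child {t c : PlaneTree} (hc : c ∈ t.childrenOf) : maxArity c ≤ maxArity t := by
  cases t with
  | node cs =>
    rw [maxArity]
    refine le_max_of_le_right (le_foldr_max ?_)
    simp only [List.mem_map]
    exact ⟨⟨c, hc⟩, List.mem_attach _ _, rfl⟩

lemma maxArity_subtree {t s : PlaneTree} {p : List ℕ} (h : t.subtreeAt p = some s) :
    maxArity s ≤ maxArity t := by
  induction p generalizing t with
  | nil => simp [subtreeAt] at h; simp [h]
  | cons i p ih =>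
    rw [subtreeAt] at h
    cases hc : (childrenOf t)[i]? with
    | none => rw [hc] at h; simp at h
    | some c =>
      rw [hc] at h
      exact (ih h).trans (maxArity_child (List.mem_of_getElem? hc))

lemma arityAt_le {t : PlaneTree} {u : List ℕ} (h : (t.subtreeAt u).isSome) :
    arityAt t u ≤ maxArity t := by
  obtain ⟨s, hs⟩ := Option.isSome_iff_exists.1 h
  rw [arityAt, hs]
  simp only [Option.map_some, Option.getD_some]
  refine le_trans ?_ (maxArity_subtree hs)
  cases s with
  | node cs => rw [maxArity, childrenOf]; exact le_max_left _ _

lemma getD_lt_arity {t : PlaneTree} {q : List ℕ} (h : IsNode t q) {i : ℕ} (hi : i < q.length) :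
    q.getD i 0 < arityAt t (q.take i) := by
  obtain ⟨s, hs⟩ := Option.isSome_iff_exists.1 (isSome_take h i)
  have h2 := subtreeAt_append t (q.take i) (q.drop i)
  rw [List.take_append_drop, hs] at h2
  unfold IsNode at h
  rw [h2] at h
  simp only [Option.bind_some] at h
  rw [List.drop_eq_getElem_cons hi, subtreeAt] at h
  rw [arityAt, hs]
  simp only [Option.map_some, Option.getD_some]
  rw [List.getD_eq_getElem _ _ hi]
  by_contra hcon
  push_neg at hcon
  rw [List.getElem?_eq_none hcon] at h
  simp at h

lemma lex_exists {p q : List ℕ} (h : List.Lex (· < ·) p q) (hlen : p.length = q.length) :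
    ∃ j, j < p.length ∧ p.take j = q.take j ∧ p.getD j 0 < q.getD j 0 := by
  induction h with
  | nil => simp at hlen
  | @cons a l₁ l₂ hl ih =>
    obtain ⟨j, hj, ht, hd⟩ := ih (by simpa using hlen)
    exact ⟨j + 1, by simpa using hj, by simp [ht], by simpa using hd⟩
  | @rel a b l₁ l₂ hab =>
    exact ⟨0, by simp, rfl, by simpa using hab⟩

lemma geom_bound (m : ℝ) (hm : 0 ≤ m) (a : ℕ) :
    ∀ n, a ≤ n →
    ∑ i ∈ Finset.Ico a n, m * ((m + 2)⁻¹) ^ (i + 1) ≤ ((m + 2)⁻¹) ^ a - ((m + 2)⁻¹) ^ n := by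
  intro n
  induction n with
  | zero => intro h; interval_cases a; simp
  | succ n ih =>
    intro h
    rcases Nat.lt_or_ge a (n + 1) with h1 | h1
    · have ha : a ≤ n := Nat.lt_succ_iff.1 h1
      rw [Finset.sum_Ico_succ_top ha]
      have hs2 : (0:ℝ) < m + 2 := by linarith
      have hs : (m + 2) * (m + 2)⁻¹ = 1 := mul_inv_cancel₀ (by linarith)
      have hp : (0:ℝ) ≤ ((m + 2)⁻¹) ^ n := pow_nonneg (by positivity) n
      have h1s : (1:ℝ) - (m + 2)⁻¹ = (m + 1) * (m + 2)⁻¹ := by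
        field_simp
        ring
      have key : m * ((m + 2)⁻¹) ^ (n + 1) ≤ ((m + 2)⁻¹) ^ n - ((m + 2)⁻¹) ^ (n + 1) := by
        have he : ((m + 2)⁻¹) ^ n - ((m + 2)⁻¹) ^ (n + 1)
            = (m + 1) * (((m + 2)⁻¹) ^ n * (m + 2)⁻¹) := by
          rw [pow_succ]; linear_combination ((m + 2)⁻¹) ^ n * h1s
        rw [he, pow_succ]
        exact mul_le_mul_of_nonneg_right (by linarith)
          (mul_nonneg hp (by positivity))
      have := ih ha
      linarith
    · have : a = n + 1 := le_antisymm h h1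
      subst this
      simp

lemma getD_take' {l : List ℕ} {i j : ℕ} (h : i < j) : (l.take j).getD i 0 = l.getD i 0 := by
  simp [List.getD_eq_getElem?_getD, List.getElem?_take, h]

/-- If `u` and `v` are distinct non-root nodes of the same depth with `u`
strictly to the left of `v` in the planar order (lexicographic order on paths
of left-to-right child indices), then `x_u > x_v`. -/
theorem xVal_strict_anti_left_to_right (t : PlaneTree) (p q : List ℕ)
    (hp : IsNode t p) (hq : IsNode t q) (hp0 : p ≠ []) (hq0 : q ≠ [])
    (hlen : p.length = q.length) (hlex : List.Lex (· < ·) p q) :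
    xVal t q < xVal t p := by
  obtain ⟨j, hjlt, htake, hgetd⟩ := lex_exists hlex hlen
  have hjn : j < q.length := hlen ▸ hjlt
  have hm0 : (0:ℝ) ≤ (maxArity t : ℝ) := Nat.cast_nonneg _
  have hs0 : (0:ℝ) < ((maxArity t : ℝ) + 2)⁻¹ := by positivity
  have hpow : ∀ i : ℕ, ((maxArity t : ℝ) + 2) ^ (-(i + 1 : ℤ))
      = (((maxArity t : ℝ) + 2)⁻¹) ^ (i + 1) := by
    intro i
    have hc : (-(i + 1 : ℤ)) = -((i + 1 : ℕ) : ℤ) := by push_cast; ring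
    rw [hc, zpow_neg, zpow_natCast, inv_pow]
  rw [xVal, xVal, hlen]
  simp only [hpow]
  apply (add_lt_add_iff_left _).2
  rw [← sub_pos, ← Finset.sum_sub_distrib, Finset.range_eq_Ico,
    ← Finset.sum_Ico_consecutive _ (Nat.zero_le j) (le_of_lt hjn),
    Finset.sum_eq_sum_Ico_succ_bot hjn]
  -- cAt agrees below j
  have hceq : ∀ i, i < j → cAt t p i = cAt t q i := by
    intro i hij
    have ht : p.take i = q.take i := by
      rw [show i = min i j from (min_eq_left hij.le).symm, ← List.take_take, htake,
        List.take_take]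
    rw [cAt, cAt, ht, ← getD_take' hij (l := p), htake, getD_take' hij]
  have h0 : ∑ i ∈ Finset.Ico 0 j,
      ((cAt t p i : ℝ) * (((maxArity t : ℝ) + 2)⁻¹) ^ (i + 1)
        - (cAt t q i : ℝ) * (((maxArity t : ℝ) + 2)⁻¹) ^ (i + 1)) = 0 := by
    apply Finset.sum_eq_zero
    intro i hi
    rw [hceq i (Finset.mem_Ico.1 hi).2]
    ring
  -- the step at j
  have hqA : q.getD j 0 < arityAt t (q.take j) := getD_lt_arity hq hjn
  have hcj : cAt t q j + 1 ≤ cAt t p j := by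
    rw [cAt, cAt, htake]
    omega
  have hcjR : (cAt t q j : ℝ) + 1 ≤ (cAt t p j : ℝ) := by exact_mod_cast hcj
  have hj1 : (((maxArity t : ℝ) + 2)⁻¹) ^ (j + 1)
      ≤ (cAt t p j : ℝ) * (((maxArity t : ℝ) + 2)⁻¹) ^ (j + 1)
        - (cAt t q j : ℝ) * (((maxArity t : ℝ) + 2)⁻¹) ^ (j + 1) := by
    have hp1 : (0:ℝ) < (((maxArity t : ℝ) + 2)⁻¹) ^ (j + 1) := pow_pos hs0 _
    nlinarith [hcjR, hp1]
  -- the tail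
  have hcqm : ∀ i, (cAt t q i : ℝ) ≤ (maxArity t : ℝ) := by
    intro i
    have : cAt t q i ≤ maxArity t := by
      rw [cAt]
      exact le_trans (Nat.sub_le _ _) (arityAt_le (isSome_take hq i))
    exact_mod_cast this
  have htail : -((((maxArity t : ℝ) + 2)⁻¹) ^ (j + 1) - (((maxArity t : ℝ) + 2)⁻¹) ^ q.length)
      ≤ ∑ i ∈ Finset.Ico (j + 1) q.length,
        ((cAt t p i : ℝ) * (((maxArity t : ℝ) + 2)⁻¹) ^ (i + 1)
          - (cAt t q i : ℝ) * (((maxArity t : ℝ) + 2)⁻¹) ^ (i + 1)) := by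
    have step1 : ∑ i ∈ Finset.Ico (j + 1) q.length,
        (-((maxArity t : ℝ) * (((maxArity t : ℝ) + 2)⁻¹) ^ (i + 1)))
        ≤ ∑ i ∈ Finset.Ico (j + 1) q.length,
        ((cAt t p i : ℝ) * (((maxArity t : ℝ) + 2)⁻¹) ^ (i + 1)
          - (cAt t q i : ℝ) * (((maxArity t : ℝ) + 2)⁻¹) ^ (i + 1)) := by
      apply Finset.sum_le_sum
      intro i _
      have hpos : (0:ℝ) ≤ (((maxArity t : ℝ) + 2)⁻¹) ^ (i + 1) := le_of_lt (pow_pos hs0 _)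
      have h1 : (cAt t q i : ℝ) * (((maxArity t : ℝ) + 2)⁻¹) ^ (i + 1)
          ≤ (maxArity t : ℝ) * (((maxArity t : ℝ) + 2)⁻¹) ^ (i + 1) :=
        mul_le_mul_of_nonneg_right (hcqm i) hpos
      have h2 : (0:ℝ) ≤ (cAt t p i : ℝ) * (((maxArity t : ℝ) + 2)⁻¹) ^ (i + 1) :=
        mul_nonneg (Nat.cast_nonneg _) hpos
      linarith
    rw [Finset.sum_neg_distrib] at step1
    have := geom_bound (maxArity t : ℝ) hm0 (j + 1) q.length hjn
    linarith
  have hsn : (0:ℝ) < (((maxArity t : ℝ) + 2)⁻¹) ^ q.length := pow_pos hs0 _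
  linarith
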